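/- For every integer n ≥ 1, if Z is an IR(G_n)-set with u ∈ Z, then Z ∩ B = ∅ and |Z ∩ A| ≤ 1. -/

import Mathlib

open SimpleGraph

section IRDefs

variable {V : Type*}

/-- `w` is a `D`-private neighbour of `v`: `w` is dominated by `v` but by no other
vertex of `D`. -/
def IsPrivateNbr (G : SimpleGraph V) (D : Set V) (v w : V) : Prop :=
  (w = v ∨ G.Adj v w) ∧ ∀ u ∈ D, u ≠ v → ¬(w = u ∨ G.Adj u w)

/-- The set `PN(v, D)` of `D`-private neighbours of `v`. -/
def PN (G : SimpleGraph V) (v : V) (D : Set V) : Set V := {w | IsPrivateNbr G D v w}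

/-- The set `EPN(v, D) = PN(v, D) − D` of external `D`-private neighbours of `v`. -/
def EPN (G : SimpleGraph V) (v : V) (D : Set V) : Set V := PN G v D \ D

/-- A set `D` is irredundant if every vertex of `D` has a `D`-private neighbour. -/
def Irredundant (G : SimpleGraph V) (D : Set V) : Prop := ∀ v ∈ D, (PN G v D).Nonempty

/-- The upper irredundance number `IR(G)`. -/
noncomputable def IRnum (G : SimpleGraph V) : ℕ :=
  sSup {n | ∃ D : Set V, Irredundant G D ∧ D.ncard = n}

/-- An `IR(G)`-set: an irredundant set of maximum cardinality `IR(G)`. -/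
def IsIRSet (G : SimpleGraph V) (D : Set V) : Prop :=
  Irredundant G D ∧ D.ncard = IRnum G

/-- The `IR`-graph of `G`: vertices are the `IR(G)`-sets, and `D` is adjacent to `D'`
iff `D' = (D − {u}) ∪ {v}` for some `u ∈ D` and `v ∈ D' − {u}` with `uv ∈ E(G)`. -/
def IRGraph (G : SimpleGraph V) [Fintype V] :
    SimpleGraph {D : Set V // IsIRSet G D} where
  Adj D D' := ∃ a b, a ∈ D.1 ∧ b ∈ D'.1 ∧ b ≠ a ∧ G.Adj a b ∧ D'.1 = (D.1 \ {a}) ∪ {b}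
  symm := by
    constructor
    rintro ⟨D, hD⟩ ⟨D', hD'⟩ ⟨a, b, ha, hb, hba, hadj, heq⟩
    dsimp only at ha hb heq ⊢
    have hbD : b ∉ D := by
      intro hbD
      have h1 : D' = D \ {a} := by
        rw [heq]
        ext x
        simp only [Set.mem_union, Set.mem_diff, Set.mem_singleton_iff]
        constructor
        · rintro (h | rfl)
          · exact h
          · exact ⟨hbD, hba⟩
        · exact Or.inl
      have h2 : D'.ncard = D.ncard - 1 := by
        rw [h1, Set.ncard_diff_singleton_of_mem ha]
      have h3 : D.ncard = D'.ncard := by rw [hD.2, hD'.2]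
      have h4 : 0 < D.ncard := (Set.ncard_pos (Set.toFinite D)).2 ⟨a, ha⟩
      omega
    refine ⟨b, a, hb, ha, fun h => hba h.symm, hadj.symm, ?_⟩
    rw [heq]
    ext x
    simp only [Set.mem_union, Set.mem_diff, Set.mem_singleton_iff]
    constructor
    · intro hx
      by_cases hxa : x = a
      · exact Or.inr hxa
      · have hxb : x ≠ b := fun h => hbD (h ▸ hx)
        exact Or.inl ⟨Or.inl ⟨hx, hxa⟩, hxb⟩
    · rintro (⟨(⟨hx, _⟩ | rfl), hxb⟩ | rfl)
      · exact hx
      · exact absurd rfl hxb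
      · exact ha
  loopless := by
    constructor
    rintro ⟨D, hD⟩ ⟨a, b, ha, hb, hba, hadj, heq⟩
    dsimp only at ha hb heq
    have h2 : a ∈ (D \ {a}) ∪ {b} := heq ▸ ha
    rcases h2 with h | h
    · exact h.2 rfl
    · exact hba h.symm

end IRDefs

/-- The vertices of the graph `Gₙ`. -/
inductive GVert (n : ℕ) : Type
  | u : GVert n
  | v : GVert n
  | a : Fin n → GVert n
  | b : Fin n → GVert n
  | c : Fin n → GVert n
  | d : Fin n → GVert n
  deriving DecidableEq, Fintype

/-- The graph `Gₙ`: edges `uv`, `u aᵢ` for all `i`, `v bᵢ` for all `i`,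
`aᵢ bⱼ` for all `i ≠ j`, and, for each `i`, the 4-cycle `(aᵢ, cᵢ, bᵢ, dᵢ, aᵢ)`. -/
def Gn (n : ℕ) : SimpleGraph (GVert n) :=
  SimpleGraph.fromRel (fun x y =>
    (x = .u ∧ y = .v) ∨
    (∃ i, x = .u ∧ y = .a i) ∨
    (∃ i, x = .v ∧ y = .b i) ∨
    (∃ i j, i ≠ j ∧ x = .a i ∧ y = .b j) ∨
    (∃ i, x = .a i ∧ y = .c i) ∨
    (∃ i, x = .c i ∧ y = .b i) ∨
    (∃ i, x = .b i ∧ y = .d i) ∨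
    (∃ i, x = .d i ∧ y = .a i))

/-- `Sᵢ = {aᵢ, bᵢ, cᵢ, dᵢ}`. -/
def Sset (n : ℕ) (i : Fin n) : Set (GVert n) := {.a i, .b i, .c i, .d i}
namespace GnAux
open GVert
variable {n : ℕ}

lemma adj_u {x : GVert n} : (Gn n).Adj .u x ↔ x = .v ∨ ∃ i, x = .a i := by
  simp only [Gn, SimpleGraph.fromRel_adj]
  constructor
  · rintro ⟨hne, h | h⟩ <;> aesop
  · rintro (rfl | ⟨i, rfl⟩) <;> simp

lemma adj_v {x : GVert n} : (Gn n).Adj .v x ↔ x = .u ∨ ∃ i, x = .b i := by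
  simp only [Gn, SimpleGraph.fromRel_adj]
  constructor
  · rintro ⟨hne, h | h⟩ <;> aesop
  · rintro (rfl | ⟨i, rfl⟩) <;> simp

lemma adj_a {i : Fin n} {x : GVert n} :
    (Gn n).Adj (.a i) x ↔ x = .u ∨ x = .c i ∨ x = .d i ∨ ∃ j, j ≠ i ∧ x = .b j := by
  simp only [Gn, SimpleGraph.fromRel_adj]
  constructor
  · rintro ⟨hne, h | h⟩ <;> aesop
  · rintro (rfl | rfl | rfl | ⟨j, hj, rfl⟩) <;> simp_all <;> aesop

lemma adj_b {i : Fin n} {x : GVert n} :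
    (Gn n).Adj (.b i) x ↔ x = .v ∨ x = .c i ∨ x = .d i ∨ ∃ j, j ≠ i ∧ x = .a j := by
  simp only [Gn, SimpleGraph.fromRel_adj]
  constructor
  · rintro ⟨hne, h | h⟩ <;> aesop
  · rintro (rfl | rfl | rfl | ⟨j, hj, rfl⟩) <;> simp_all <;> aesop

lemma adj_c {i : Fin n} {x : GVert n} :
    (Gn n).Adj (.c i) x ↔ x = .a i ∨ x = .b i := by
  simp only [Gn, SimpleGraph.fromRel_adj]
  constructor
  · rintro ⟨hne, h | h⟩ <;> aesop
  · rintro (rfl | rfl) <;> simp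

lemma adj_d {i : Fin n} {x : GVert n} :
    (Gn n).Adj (.d i) x ↔ x = .a i ∨ x = .b i := by
  simp only [Gn, SimpleGraph.fromRel_adj]
  constructor
  · rintro ⟨hne, h | h⟩ <;> aesop
  · rintro (rfl | rfl) <;> simp

end GnAux
namespace GnAux2
open GVert GnAux
variable {n : ℕ}

lemma ncard_biUnion_le {ι α : Type*} [Finite α] (s : Finset ι) (f : ι → Set α) :
    (⋃ i ∈ s, f i).ncard ≤ ∑ i ∈ s, (f i).ncard := by
  classical
  induction s using Finset.induction with
  | empty => simp
  | insert _ _ h ih =>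
    rw [Finset.set_biUnion_insert, Finset.sum_insert h]
    exact le_trans (Set.ncard_union_le _ _) (by omega)

lemma count_le (Z : Set (GVert n)) (m : Fin n → ℕ)
    (h : ∀ k, (Z ∩ Sset n k).ncard ≤ m k) :
    Z.ncard ≤ (Z ∩ {GVert.u, GVert.v}).ncard + ∑ k, m k := by
  classical
  have hsub : Z ⊆ (Z ∩ {GVert.u, GVert.v}) ∪ ⋃ k ∈ Finset.univ, (Z ∩ Sset n k) := by
    intro x hx
    cases x with
    | u => exact Or.inl ⟨hx, Or.inl rfl⟩
    | v => exact Or.inl ⟨hx, Or.inr rfl⟩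
    | a i => exact Or.inr (Set.mem_biUnion (Finset.mem_univ i) ⟨hx, by simp [Sset]⟩)
    | b i => exact Or.inr (Set.mem_biUnion (Finset.mem_univ i) ⟨hx, by simp [Sset]⟩)
    | c i => exact Or.inr (Set.mem_biUnion (Finset.mem_univ i) ⟨hx, by simp [Sset]⟩)
    | d i => exact Or.inr (Set.mem_biUnion (Finset.mem_univ i) ⟨hx, by simp [Sset]⟩)
  calc Z.ncard ≤ _ := Set.ncard_le_ncard hsub (Set.toFinite _)
    _ ≤ (Z ∩ {GVert.u, GVert.v}).ncard + (⋃ k ∈ Finset.univ, (Z ∩ Sset n k)).ncard :=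
        Set.ncard_union_le _ _
    _ ≤ (Z ∩ {GVert.u, GVert.v}).ncard + ∑ k, (Z ∩ Sset n k).ncard := by
        have := ncard_biUnion_le (Finset.univ : Finset (Fin n)) (fun k => Z ∩ Sset n k)
        omega
    _ ≤ _ := by
        have : ∑ k, (Z ∩ Sset n k).ncard ≤ ∑ k, m k :=
          Finset.sum_le_sum (fun k _ => h k)
        omega

end GnAux2
namespace GnAux3
open GVert GnAux
variable {n : ℕ}

def W (n : ℕ) : Set (GVert n) := insert GVert.u (Set.range GVert.c ∪ Set.range GVert.d)

lemma W_card : (W n).ncard = 2 * n + 1 := by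
  have hc : (Set.range (GVert.c : Fin n → GVert n)).ncard = n := by
    rw [← Set.image_univ, Set.ncard_image_of_injective _ (fun i j h => by injection h)]
    simp [Set.ncard_univ]
  have hd : (Set.range (GVert.d : Fin n → GVert n)).ncard = n := by
    rw [← Set.image_univ, Set.ncard_image_of_injective _ (fun i j h => by injection h)]
    simp [Set.ncard_univ]
  have hdisj : Disjoint (Set.range (GVert.c : Fin n → GVert n)) (Set.range GVert.d) := by
    rw [Set.disjoint_iff_inter_eq_empty]
    ext x; simp only [Set.mem_inter_iff, Set.mem_range, Set.mem_empty_iff_false, iff_false]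
    rintro ⟨⟨i, rfl⟩, ⟨j, h⟩⟩; exact nomatch h
  have hu : (GVert.u : GVert n) ∉ Set.range GVert.c ∪ Set.range GVert.d := by
    rintro (⟨i, h⟩ | ⟨i, h⟩) <;> exact nomatch h
  rw [W, Set.ncard_insert_of_notMem hu (Set.toFinite _),
    Set.ncard_union_eq hdisj (Set.toFinite _) (Set.toFinite _), hc, hd]
  ring

lemma W_irred : Irredundant (Gn n) (W n) := by
  intro x hx
  have key : ∀ x ∈ W n, (∀ y ∈ W n, y ≠ x → ¬(x = y ∨ (Gn n).Adj y x)) → (PN (Gn n) x (W n)).Nonempty := by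
    intro x hx h
    exact ⟨x, ⟨Or.inl rfl, h⟩⟩
  rcases hx with rfl | (⟨i, rfl⟩ | ⟨i, rfl⟩)
  · refine key _ (Or.inl rfl) ?_
    rintro y (rfl | (⟨i, rfl⟩ | ⟨i, rfl⟩)) hne (h | h)
    · exact hne rfl
    · exact hne rfl
    · exact nomatch h
    · rw [adj_c] at h; rcases h with h | h <;> exact nomatch h
    · exact nomatch h
    · rw [adj_d] at h; rcases h with h | h <;> exact nomatch h
  · refine key _ (Or.inr (Or.inl ⟨i, rfl⟩)) ?_
    rintro y (rfl | (⟨j, rfl⟩ | ⟨j, rfl⟩)) hne (h | h)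
    · exact nomatch h
    · rw [adj_u] at h; rcases h with h | ⟨k, h⟩ <;> exact nomatch h
    · exact hne h.symm
    · rw [adj_c] at h; rcases h with h | h <;> exact nomatch h
    · exact nomatch h
    · rw [adj_d] at h; rcases h with h | h <;> exact nomatch h
  · refine key _ (Or.inr (Or.inr ⟨i, rfl⟩)) ?_
    rintro y (rfl | (⟨j, rfl⟩ | ⟨j, rfl⟩)) hne (h | h)
    · exact nomatch h
    · rw [adj_u] at h; rcases h with h | ⟨k, h⟩ <;> exact nomatch h
    · exact nomatch h
    · rw [adj_c] at h; rcases h with h | h <;> exact nomatch h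
    · exact hne h.symm
    · rw [adj_d] at h; rcases h with h | h <;> exact nomatch h

lemma IRnum_lower : 2 * n + 1 ≤ IRnum (Gn n) := by
  apply le_csSup
  · refine ⟨Fintype.card (GVert n), ?_⟩
    rintro m ⟨D, _, rfl⟩
    have := Set.ncard_le_ncard (Set.subset_univ D) Set.finite_univ
    simpa [Set.ncard_univ] using this
  · exact ⟨W n, W_irred, W_card⟩

end GnAux3
namespace GnMain
open GVert GnAux GnAux2 GnAux3
variable {n : ℕ}

lemma adj_u_v : (Gn n).Adj .u .v := adj_u.mpr (Or.inl rfl)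
lemma adj_v_u : (Gn n).Adj .v .u := adj_v.mpr (Or.inl rfl)
lemma adj_u_a (i : Fin n) : (Gn n).Adj .u (.a i) := adj_u.mpr (Or.inr ⟨i, rfl⟩)
lemma adj_a_u (i : Fin n) : (Gn n).Adj (.a i) .u := adj_a.mpr (Or.inl rfl)
lemma adj_b_v (i : Fin n) : (Gn n).Adj (.b i) .v := adj_b.mpr (Or.inl rfl)
lemma adj_c_a (i : Fin n) : (Gn n).Adj (.c i) (.a i) := adj_c.mpr (Or.inl rfl)
lemma adj_c_b (i : Fin n) : (Gn n).Adj (.c i) (.b i) := adj_c.mpr (Or.inr rfl)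
lemma adj_d_a (i : Fin n) : (Gn n).Adj (.d i) (.a i) := adj_d.mpr (Or.inl rfl)
lemma adj_d_b (i : Fin n) : (Gn n).Adj (.d i) (.b i) := adj_d.mpr (Or.inr rfl)
lemma adj_a_c (i : Fin n) : (Gn n).Adj (.a i) (.c i) := adj_a.mpr (Or.inr (Or.inl rfl))
lemma adj_a_d (i : Fin n) : (Gn n).Adj (.a i) (.d i) := adj_a.mpr (Or.inr (Or.inr (Or.inl rfl)))
lemma adj_b_c (i : Fin n) : (Gn n).Adj (.b i) (.c i) := adj_b.mpr (Or.inr (Or.inl rfl))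
lemma adj_b_d (i : Fin n) : (Gn n).Adj (.b i) (.d i) := adj_b.mpr (Or.inr (Or.inr (Or.inl rfl)))
lemma adj_b_a {i k : Fin n} (h : i ≠ k) : (Gn n).Adj (.b k) (.a i) :=
  adj_b.mpr (Or.inr (Or.inr (Or.inr ⟨i, h, rfl⟩)))
lemma adj_a_b {i k : Fin n} (h : k ≠ i) : (Gn n).Adj (.a i) (.b k) :=
  adj_a.mpr (Or.inr (Or.inr (Or.inr ⟨k, h, rfl⟩)))

lemma mem_Sset {x : GVert n} {i : Fin n} :
    x ∈ Sset n i ↔ x = .a i ∨ x = .b i ∨ x = .c i ∨ x = .d i := by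
  simp [Sset]

lemma ncard_le_one_of_subset {s : Set (GVert n)} {x : GVert n} (h : s ⊆ {x}) : s.ncard ≤ 1 := by
  simpa using Set.ncard_le_ncard h (Set.toFinite _)

lemma ncard_le_two_of_subset {s : Set (GVert n)} {x y : GVert n} (h : s ⊆ {x, y}) :
    s.ncard ≤ 2 :=
  le_trans (Set.ncard_le_ncard h (Set.toFinite _))
    (le_trans (Set.ncard_insert_le _ _) (by simp))

lemma pn_c {Z : Set (GVert n)} (hirr : Irredundant (Gn n) Z) {i : Fin n}
    (hx : GVert.c i ∈ Z)
    (h1 : ∃ y ∈ Z, y ≠ .c i ∧ (GVert.c i = y ∨ (Gn n).Adj y (.c i)))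
    (h2 : ∃ y ∈ Z, y ≠ .c i ∧ (GVert.a i = y ∨ (Gn n).Adj y (.a i)))
    (h3 : ∃ y ∈ Z, y ≠ .c i ∧ (GVert.b i = y ∨ (Gn n).Adj y (.b i))) : False := by
  obtain ⟨w, hw1, hw2⟩ := hirr _ hx
  rcases hw1 with rfl | hadj
  · obtain ⟨y, hy, hne, hd⟩ := h1; exact hw2 y hy hne hd
  · rcases adj_c.1 hadj with rfl | rfl
    · obtain ⟨y, hy, hne, hd⟩ := h2; exact hw2 y hy hne hd
    · obtain ⟨y, hy, hne, hd⟩ := h3; exact hw2 y hy hne hd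

lemma pn_d {Z : Set (GVert n)} (hirr : Irredundant (Gn n) Z) {i : Fin n}
    (hx : GVert.d i ∈ Z)
    (h1 : ∃ y ∈ Z, y ≠ .d i ∧ (GVert.d i = y ∨ (Gn n).Adj y (.d i)))
    (h2 : ∃ y ∈ Z, y ≠ .d i ∧ (GVert.a i = y ∨ (Gn n).Adj y (.a i)))
    (h3 : ∃ y ∈ Z, y ≠ .d i ∧ (GVert.b i = y ∨ (Gn n).Adj y (.b i))) : False := by
  obtain ⟨w, hw1, hw2⟩ := hirr _ hx
  rcases hw1 with rfl | hadj
  · obtain ⟨y, hy, hne, hd⟩ := h1; exact hw2 y hy hne hd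
  · rcases adj_d.1 hadj with rfl | rfl
    · obtain ⟨y, hy, hne, hd⟩ := h2; exact hw2 y hy hne hd
    · obtain ⟨y, hy, hne, hd⟩ := h3; exact hw2 y hy hne hd

variable {Z : Set (GVert n)}

/-- If `u, bₖ, cₖ ∈ Z` then `Z` is not irredundant. -/
lemma bc_false (hirr : Irredundant (Gn n) Z) (hu : GVert.u ∈ Z) {k : Fin n}
    (hb : GVert.b k ∈ Z) (hc : GVert.c k ∈ Z) : False :=
  pn_c hirr hc ⟨_, hb, by simp, Or.inr (adj_b_c k)⟩
    ⟨_, hu, by simp, Or.inr (adj_u_a k)⟩ ⟨_, hb, by simp, Or.inl rfl⟩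

lemma bd_false (hirr : Irredundant (Gn n) Z) (hu : GVert.u ∈ Z) {k : Fin n}
    (hb : GVert.b k ∈ Z) (hd : GVert.d k ∈ Z) : False :=
  pn_d hirr hd ⟨_, hb, by simp, Or.inr (adj_b_d k)⟩
    ⟨_, hu, by simp, Or.inr (adj_u_a k)⟩ ⟨_, hb, by simp, Or.inl rfl⟩

/-- If `u, aₖ, cₖ, dₖ ∈ Z` then `Z` is not irredundant. -/
lemma acd_false (hirr : Irredundant (Gn n) Z) (hu : GVert.u ∈ Z) {k : Fin n}
    (ha : GVert.a k ∈ Z) (hc : GVert.c k ∈ Z) (hd : GVert.d k ∈ Z) : False :=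
  pn_c hirr hc ⟨_, ha, by simp, Or.inr (adj_a_c k)⟩
    ⟨_, hu, by simp, Or.inr (adj_u_a k)⟩ ⟨_, hd, by simp, Or.inr (adj_d_b k)⟩

/-- If `u, aᵢ, aⱼ, cᵢ ∈ Z` with `i ≠ j` then `Z` is not irredundant. -/
lemma aac_false (hirr : Irredundant (Gn n) Z) (hu : GVert.u ∈ Z) {i j : Fin n} (hij : j ≠ i)
    (hai : GVert.a i ∈ Z) (haj : GVert.a j ∈ Z) (hc : GVert.c i ∈ Z) : False :=
  pn_c hirr hc ⟨_, hai, by simp, Or.inr (adj_a_c i)⟩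
    ⟨_, hu, by simp, Or.inr (adj_u_a i)⟩ ⟨_, haj, by simp, Or.inr (adj_a_b hij.symm)⟩

lemma aad_false (hirr : Irredundant (Gn n) Z) (hu : GVert.u ∈ Z) {i j : Fin n} (hij : j ≠ i)
    (hai : GVert.a i ∈ Z) (haj : GVert.a j ∈ Z) (hd : GVert.d i ∈ Z) : False :=
  pn_d hirr hd ⟨_, hai, by simp, Or.inr (adj_a_d i)⟩
    ⟨_, hu, by simp, Or.inr (adj_u_a i)⟩ ⟨_, haj, by simp, Or.inr (adj_a_b hij.symm)⟩

/-- When `u ∈ Z` and `Z` is irredundant, every `|Z ∩ Sₖ| ≤ 2`. -/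
lemma SK_le_two (hirr : Irredundant (Gn n) Z) (hu : GVert.u ∈ Z) (k : Fin n) :
    (Z ∩ Sset n k).ncard ≤ 2 := by
  by_cases hb : GVert.b k ∈ Z
  · -- then cₖ, dₖ ∉ Z
    apply ncard_le_two_of_subset (x := GVert.a k) (y := GVert.b k)
    rintro x ⟨hxZ, hxS⟩
    rcases mem_Sset.1 hxS with rfl | rfl | rfl | rfl
    · exact Or.inl rfl
    · exact Or.inr rfl
    · exact absurd (bc_false hirr hu hb hxZ) not_false
    · exact absurd (bd_false hirr hu hb hxZ) not_false
  · by_cases ha : GVert.a k ∈ Z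
    · by_cases hc : GVert.c k ∈ Z
      · -- dₖ ∉ Z
        apply ncard_le_two_of_subset (x := GVert.a k) (y := GVert.c k)
        rintro x ⟨hxZ, hxS⟩
        rcases mem_Sset.1 hxS with rfl | rfl | rfl | rfl
        · exact Or.inl rfl
        · exact absurd hxZ hb
        · exact Or.inr rfl
        · exact absurd (acd_false hirr hu ha hc hxZ) not_false
      · apply ncard_le_two_of_subset (x := GVert.a k) (y := GVert.d k)
        rintro x ⟨hxZ, hxS⟩
        rcases mem_Sset.1 hxS with rfl | rfl | rfl | rfl
        · exact Or.inl rfl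
        · exact absurd hxZ hb
        · exact absurd hxZ hc
        · exact Or.inr rfl
    · apply ncard_le_two_of_subset (x := GVert.c k) (y := GVert.d k)
      rintro x ⟨hxZ, hxS⟩
      rcases mem_Sset.1 hxS with rfl | rfl | rfl | rfl
      · exact absurd hxZ ha
      · exact absurd hxZ hb
      · exact Or.inl rfl
      · exact Or.inr rfl

lemma sum_one_special (i : Fin n) (a : ℕ) :
    ∑ k : Fin n, (if k = i then a else 2) = a + 2 * (n - 1) := by
  classical
  rw [← Finset.add_sum_erase _ _ (Finset.mem_univ i), if_pos rfl]
  congr 1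
  rw [Finset.sum_congr rfl (fun k hk => if_neg (Finset.ne_of_mem_erase hk)),
    Finset.sum_const, smul_eq_mul, Finset.card_erase_of_mem (Finset.mem_univ i),
    Finset.card_univ, Fintype.card_fin]
  ring

lemma sum_two_special {i j : Fin n} (hij : i ≠ j) :
    ∑ k : Fin n, (if k = i ∨ k = j then 1 else 2) = 2 + 2 * (n - 2) := by
  classical
  rw [← Finset.add_sum_erase _ _ (Finset.mem_univ i), if_pos (Or.inl rfl)]
  have hj : j ∈ Finset.univ.erase i := Finset.mem_erase.2 ⟨hij.symm, Finset.mem_univ j⟩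
  rw [← Finset.add_sum_erase _ _ hj, if_pos (Or.inr rfl)]
  have hcongr : ∀ k ∈ (Finset.univ.erase i).erase j, (if k = i ∨ k = j then 1 else 2) = 2 := by
    intro k hk
    rw [Finset.mem_erase, Finset.mem_erase] at hk
    rw [if_neg]
    rintro (rfl | rfl)
    · exact hk.2.1 rfl
    · exact hk.1 rfl
  rw [Finset.sum_congr rfl hcongr, Finset.sum_const, smul_eq_mul,
    Finset.card_erase_of_mem hj, Finset.card_erase_of_mem (Finset.mem_univ i),
    Finset.card_univ, Fintype.card_fin]
  omega

end GnMain
open GnAux GnAux2 GnAux3 GnMain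
/-- For every `n ≥ 1`, if `Z` is an `IR(Gₙ)`-set with `u ∈ Z`, then
`Z ∩ B = ∅` and `|Z ∩ A| ≤ 1`. -/
theorem statement6 (n : ℕ) (hn : 1 ≤ n) (Z : Set (GVert n))
    (hZ : IsIRSet (Gn n) Z) (hu : GVert.u ∈ Z) :
    Z ∩ {x | ∃ i, x = GVert.b i} = ∅ ∧ (Z ∩ {x | ∃ i, x = GVert.a i}).ncard ≤ 1 := by
  classical
  obtain ⟨hirr, hcard⟩ := hZ
  have hbig : 2 * n + 1 ≤ Z.ncard := by rw [hcard]; exact IRnum_lower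
  have huv2 : (Z ∩ {GVert.u, GVert.v}).ncard ≤ 2 :=
    ncard_le_two_of_subset Set.inter_subset_right
  -- Step 1: v ∉ Z
  have hv : GVert.v ∉ Z := by
    intro hv
    obtain ⟨w, hw1, hw2⟩ := hirr _ hu
    have hwa : ∃ i, w = GVert.a i := by
      rcases hw1 with rfl | hadj
      · exact absurd (Or.inr adj_v_u) (hw2 _ hv (by simp))
      · rcases adj_u.1 hadj with rfl | h
        · exact absurd (Or.inl rfl) (hw2 _ hv (by simp))
        · exact h
    obtain ⟨i, rfl⟩ := hwa
    obtain ⟨w', hw1', hw2'⟩ := hirr _ hv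
    have hwb : ∃ j, w' = GVert.b j := by
      rcases hw1' with rfl | hadj
      · exact absurd (Or.inr adj_u_v) (hw2' _ hu (by simp))
      · rcases adj_v.1 hadj with rfl | h
        · exact absurd (Or.inl rfl) (hw2' _ hu (by simp))
        · exact h
    obtain ⟨j, rfl⟩ := hwb
    have hai : GVert.a i ∉ Z := fun h => hw2 _ h (by simp) (Or.inl rfl)
    have hci : GVert.c i ∉ Z := fun h => hw2 _ h (by simp) (Or.inr (adj_c_a i))
    have hdi : GVert.d i ∉ Z := fun h => hw2 _ h (by simp) (Or.inr (adj_d_a i))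
    have hbk : ∀ k, k ≠ i → GVert.b k ∉ Z := fun k hk h =>
      hw2 _ h (by simp) (Or.inr (adj_b_a (Ne.symm hk)))
    have hbj : GVert.b j ∉ Z := fun h => hw2' _ h (by simp) (Or.inl rfl)
    have hcj : GVert.c j ∉ Z := fun h => hw2' _ h (by simp) (Or.inr (adj_c_b j))
    have hdj : GVert.d j ∉ Z := fun h => hw2' _ h (by simp) (Or.inr (adj_d_b j))
    have hak : ∀ k, k ≠ j → GVert.a k ∉ Z := fun k hk h =>
      hw2' _ h (by simp) (Or.inr (adj_a_b hk.symm))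
    by_cases hij : i = j
    · subst hij
      have hcount := count_le Z (fun k => if k = i then 0 else 2) ?_
      · rw [sum_one_special] at hcount
        omega
      · intro k
        by_cases hk : k = i
        · subst hk
          beta_reduce
          rw [if_pos rfl, Nat.le_zero, Set.ncard_eq_zero (Set.toFinite _)]
          ext x
          simp only [Set.mem_inter_iff, Set.mem_empty_iff_false, iff_false, not_and]
          intro hxZ hxS
          rcases mem_Sset.1 hxS with rfl | rfl | rfl | rfl
          · exact hai hxZ
          · exact hbj hxZ
          · exact hci hxZ
          · exact hdi hxZ
        · (try beta_reduce); rw [if_neg hk]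
          exact SK_le_two hirr hu k
    · have hcount := count_le Z (fun k => if k = i ∨ k = j then 1 else 2) ?_
      · have h2n : 2 ≤ n := by
          have h1 : 1 < Fintype.card (Fin n) :=
            Fintype.one_lt_card_iff_nontrivial.mpr ⟨i, j, hij⟩
          rw [Fintype.card_fin] at h1; omega
        rw [sum_two_special hij] at hcount
        omega
      · intro k
        by_cases hki : k = i
        · subst hki
          beta_reduce
          rw [if_pos (Or.inl rfl)]
          apply ncard_le_one_of_subset (x := GVert.b k)
          rintro x ⟨hxZ, hxS⟩
          rcases mem_Sset.1 hxS with rfl | rfl | rfl | rfl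
          · exact absurd hxZ hai
          · rfl
          · exact absurd hxZ hci
          · exact absurd hxZ hdi
        · by_cases hkj : k = j
          · subst hkj
            beta_reduce
            rw [if_pos (Or.inr rfl)]
            apply ncard_le_one_of_subset (x := GVert.a k)
            rintro x ⟨hxZ, hxS⟩
            rcases mem_Sset.1 hxS with rfl | rfl | rfl | rfl
            · rfl
            · exact absurd hxZ (hbk k hki)
            · exact absurd hxZ hcj
            · exact absurd hxZ hdj
          · (try beta_reduce); rw [if_neg (by tauto)]
            exact SK_le_two hirr hu k
  have huv1 : (Z ∩ {GVert.u, GVert.v}).ncard ≤ 1 := by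
    apply ncard_le_one_of_subset (x := GVert.u)
    rintro x ⟨hxZ, rfl | rfl⟩
    · rfl
    · exact absurd hxZ hv
  obtain ⟨w, hw1, hw2⟩ := hirr _ hu
  rcases hw1 with rfl | hadj
  · -- w = u : A ∩ Z = ∅, show B ∩ Z = ∅
    have hA : ∀ k, GVert.a k ∉ Z := fun k h => hw2 _ h (by simp) (Or.inr (adj_a_u k))
    have hB : ∀ k, GVert.b k ∉ Z := by
      intro k hbZ
      have hcount := count_le Z (fun k' => if k' = k then 1 else 2) ?_
      · rw [sum_one_special] at hcount
        omega
      · intro k'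
        by_cases hk : k' = k
        · subst hk
          beta_reduce
          apply le_trans ?_ (le_of_eq (if_pos rfl).symm)
          apply ncard_le_one_of_subset (x := GVert.b k')
          rintro x ⟨hxZ, hxS⟩
          rcases mem_Sset.1 hxS with rfl | rfl | rfl | rfl
          · exact absurd hxZ (hA k')
          · rfl
          · exact absurd (bc_false hirr hu hbZ hxZ) not_false
          · exact absurd (bd_false hirr hu hbZ hxZ) not_false
        · (try beta_reduce); rw [if_neg hk]
          exact SK_le_two hirr hu k'
    constructor
    · ext x
      simp only [Set.mem_inter_iff, Set.mem_setOf_eq, Set.mem_empty_iff_false, iff_false,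
        not_and]
      rintro hxZ ⟨i, rfl⟩
      exact hB i hxZ
    · have hAe : Z ∩ {x | ∃ i, x = GVert.a i} = ∅ := by
        ext x
        simp only [Set.mem_inter_iff, Set.mem_setOf_eq, Set.mem_empty_iff_false, iff_false,
          not_and]
        rintro hxZ ⟨i, rfl⟩
        exact hA i hxZ
      rw [hAe]
      simp
  · rcases adj_u.1 hadj with rfl | ⟨i, rfl⟩
    · -- w = v
      have hB : ∀ k, GVert.b k ∉ Z := fun k h => hw2 _ h (by simp) (Or.inr (adj_b_v k))
      have hBe : Z ∩ {x | ∃ i, x = GVert.b i} = ∅ := by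
        ext x
        simp only [Set.mem_inter_iff, Set.mem_setOf_eq, Set.mem_empty_iff_false, iff_false,
          not_and]
        rintro hxZ ⟨i, rfl⟩
        exact hB i hxZ
      refine ⟨hBe, ?_⟩
      by_contra hA2
      push_neg at hA2
      obtain ⟨x, y, hx, hy, hxy⟩ :=
        (Set.one_lt_ncard_iff (Set.toFinite _)).1 hA2
      obtain ⟨hxZ, i, rfl⟩ := hx
      obtain ⟨hyZ, j, rfl⟩ := hy
      have hij : i ≠ j := fun h => hxy (by rw [h])
      have hcount := count_le Z (fun k => if k = i ∨ k = j then 1 else 2) ?_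
      · have h2n : 2 ≤ n := by
          have h1 : 1 < Fintype.card (Fin n) :=
            Fintype.one_lt_card_iff_nontrivial.mpr ⟨i, j, hij⟩
          rw [Fintype.card_fin] at h1; omega
        rw [sum_two_special hij] at hcount
        omega
      · intro k
        by_cases hki : k = i
        · subst hki
          beta_reduce
          rw [if_pos (Or.inl rfl)]
          apply ncard_le_one_of_subset (x := GVert.a k)
          rintro z ⟨hzZ, hzS⟩
          rcases mem_Sset.1 hzS with rfl | rfl | rfl | rfl
          · rfl
          · exact absurd hzZ (hB k)
          · exact absurd (aac_false hirr hu hij.symm hxZ hyZ hzZ) not_false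
          · exact absurd (aad_false hirr hu hij.symm hxZ hyZ hzZ) not_false
        · by_cases hkj : k = j
          · subst hkj
            beta_reduce
            rw [if_pos (Or.inr rfl)]
            apply ncard_le_one_of_subset (x := GVert.a k)
            rintro z ⟨hzZ, hzS⟩
            rcases mem_Sset.1 hzS with rfl | rfl | rfl | rfl
            · rfl
            · exact absurd hzZ (hB k)
            · exact absurd (aac_false hirr hu hij hyZ hxZ hzZ) not_false
            · exact absurd (aad_false hirr hu hij hyZ hxZ hzZ) not_false
          · (try beta_reduce); rw [if_neg (by tauto)]
            exact SK_le_two hirr hu k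
    · -- w = a i : impossible
      exfalso
      have hai : GVert.a i ∉ Z := fun h => hw2 _ h (by simp) (Or.inl rfl)
      have hci : GVert.c i ∉ Z := fun h => hw2 _ h (by simp) (Or.inr (adj_c_a i))
      have hdi : GVert.d i ∉ Z := fun h => hw2 _ h (by simp) (Or.inr (adj_d_a i))
      have hcount := count_le Z (fun k => if k = i then 1 else 2) ?_
      · rw [sum_one_special] at hcount
        omega
      · intro k
        by_cases hk : k = i
        · subst hk
          beta_reduce
          rw [if_pos rfl]
          apply ncard_le_one_of_subset (x := GVert.b k)
          rintro x ⟨hxZ, hxS⟩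
          rcases mem_Sset.1 hxS with rfl | rfl | rfl | rfl
          · exact absurd hxZ hai
          · rfl
          · exact absurd hxZ hci
          · exact absurd hxZ hdi
        · (try beta_reduce); rw [if_neg hk]
          exact SK_le_two hirr hu k
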